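/- Let T be a 3-form on ℝⁿ and suppose a subspace V ⊂ ℝⁿ is invariant under all endomorphisms X ⌟ T ∈ so(n), X ∈ ℝⁿ (hence under the Lie algebra g*_T they generate). Then T = T₁ + T₂ with T₁ ∈ Λ³(V) and T₂ ∈ Λ³(V^⊥), i.e. T(X,Y,Z) = 0 whenever one argument is in V and another in V^⊥. -/

import Mathlib

/-- The 2-form `X ⌟ T` of a 3-form `T` on `ℝⁿ`, viewed as a matrix (an element
of `so(n)`): `(X ⌟ T)_{jk} = Σᵢ Xᵢ T_{ijk}`. -/
def matT (n : ℕ) (T : Fin n → Fin n → Fin n → ℝ) (X : Fin n → ℝ) :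
    Matrix (Fin n) (Fin n) ℝ :=
  Matrix.of fun j k => ∑ i, X i * T i j k

/-- Evaluation of the 3-form `T` on three vectors. -/
def evalT (n : ℕ) (T : Fin n → Fin n → Fin n → ℝ) (X Y Z : Fin n → ℝ) : ℝ :=
  ∑ i, ∑ j, ∑ k, X i * Y j * Z k * T i j k

lemma ev12 (n : ℕ) (T : Fin n → Fin n → Fin n → ℝ)
    (halt : ∀ i j k : Fin n, T i j k = - T j i k ∧ T i j k = - T i k j)
    (X Y Z : Fin n → ℝ) : evalT n T Y X Z = - evalT n T X Y Z := by
  unfold evalT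
  rw [Finset.sum_comm, ← Finset.sum_neg_distrib]
  refine Finset.sum_congr rfl fun i _ => ?_
  rw [← Finset.sum_neg_distrib]
  refine Finset.sum_congr rfl fun j _ => ?_
  rw [← Finset.sum_neg_distrib]
  refine Finset.sum_congr rfl fun k _ => ?_
  rw [(halt j i k).1]; ring

lemma ev23 (n : ℕ) (T : Fin n → Fin n → Fin n → ℝ)
    (halt : ∀ i j k : Fin n, T i j k = - T j i k ∧ T i j k = - T i k j)
    (X Y Z : Fin n → ℝ) : evalT n T X Z Y = - evalT n T X Y Z := by
  unfold evalT
  rw [← Finset.sum_neg_distrib]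
  refine Finset.sum_congr rfl fun i _ => ?_
  rw [Finset.sum_comm, ← Finset.sum_neg_distrib]
  refine Finset.sum_congr rfl fun j _ => ?_
  rw [← Finset.sum_neg_distrib]
  refine Finset.sum_congr rfl fun k _ => ?_
  rw [(halt i j k).2]; ring

lemma sum_rev3 (n : ℕ) (f : Fin n → Fin n → Fin n → ℝ) :
    ∑ i, ∑ j, ∑ k, f i j k = ∑ k, ∑ j, ∑ i, f i j k := by
  calc ∑ i, ∑ j, ∑ k, f i j k
      = ∑ i, ∑ k, ∑ j, f i j k := Finset.sum_congr rfl fun i _ => Finset.sum_comm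
    _ = ∑ k, ∑ i, ∑ j, f i j k := Finset.sum_comm
    _ = ∑ k, ∑ j, ∑ i, f i j k := Finset.sum_congr rfl fun k _ => Finset.sum_comm

lemma keylem (n : ℕ) (T : Fin n → Fin n → Fin n → ℝ)
    (halt : ∀ i j k : Fin n, T i j k = - T j i k ∧ T i j k = - T i k j)
    (V : Submodule ℝ (EuclideanSpace ℝ (Fin n)))
    (hinv : ∀ (X : Fin n → ℝ), ∀ v ∈ V,
        (WithLp.toLp 2 ((matT n T X).mulVec v) : EuclideanSpace ℝ (Fin n)) ∈ V)
    (X Y Z : EuclideanSpace ℝ (Fin n)) (hY : Y ∈ V) (hZ : Z ∈ Vᗮ) :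
    evalT n T X Y Z = 0 := by
  have h0 := (Submodule.mem_orthogonal V Z).mp hZ
      (WithLp.toLp 2 ((matT n T X).mulVec Y) : EuclideanSpace ℝ (Fin n)) (hinv X Y hY)
  have h1 : ∑ k, ∑ j, ∑ i, X i * T i k j * Y j * Z k = 0 := by
    simpa [matT, PiLp.inner_apply, RCLike.inner_apply, Matrix.mulVec, dotProduct,
      Finset.sum_mul, Finset.mul_sum, mul_comm, mul_assoc, mul_left_comm] using h0
  have h2 : evalT n T X Y Z = - ∑ k, ∑ j, ∑ i, X i * T i k j * Y j * Z k := by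
    rw [← sum_rev3]
    unfold evalT
    rw [← Finset.sum_neg_distrib]
    refine Finset.sum_congr rfl fun i _ => ?_
    rw [← Finset.sum_neg_distrib]
    refine Finset.sum_congr rfl fun j _ => ?_
    rw [← Finset.sum_neg_distrib]
    refine Finset.sum_congr rfl fun k _ => ?_
    rw [(halt i j k).2]; ring
  rw [h2, h1, neg_zero]

/-- If a subspace `V ⊆ ℝⁿ` is invariant under all endomorphisms
`X ⌟ T ∈ so(n)` (hence under the Lie algebra `g*_T` they generate), then
`T = T₁ + T₂` with `T₁ ∈ Λ³(V)` and `T₂ ∈ Λ³(V^⊥)`; i.e. `T(X,Y,Z) = 0`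
whenever one argument is in `V` and another one is in `V^⊥`. -/
theorem threeform_splits_of_invariant_subspace (n : ℕ)
    (T : Fin n → Fin n → Fin n → ℝ)
    (halt : ∀ i j k : Fin n, T i j k = - T j i k ∧ T i j k = - T i k j)
    (V : Submodule ℝ (EuclideanSpace ℝ (Fin n)))
    (hinv : ∀ (X : Fin n → ℝ), ∀ v ∈ V,
        (WithLp.toLp 2 ((matT n T X).mulVec v) : EuclideanSpace ℝ (Fin n)) ∈ V) :
    ∀ X Y Z : EuclideanSpace ℝ (Fin n),
      ((X ∈ V ∧ (Y ∈ Vᗮ ∨ Z ∈ Vᗮ)) ∨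
       (Y ∈ V ∧ (X ∈ Vᗮ ∨ Z ∈ Vᗮ)) ∨
       (Z ∈ V ∧ (X ∈ Vᗮ ∨ Y ∈ Vᗮ))) →
      evalT n T X Y Z = 0 := by
  intro X Y Z h
  rcases h with ⟨hX, hY | hZ⟩ | ⟨hY, hX | hZ⟩ | ⟨hZ, hX | hY⟩
  · have k := keylem n T halt V hinv Z X Y hX hY
    have a := ev23 n T halt X Y Z
    have b := ev12 n T halt X Z Y
    linarith
  · have k := keylem n T halt V hinv Y X Z hX hZ
    have b := ev12 n T halt X Y Z
    linarith
  · have k := keylem n T halt V hinv Z Y X hY hX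
    have a := ev12 n T halt X Y Z
    have b := ev23 n T halt Y X Z
    have c := ev12 n T halt Y Z X
    linarith
  · exact keylem n T halt V hinv X Y Z hY hZ
  · have k := keylem n T halt V hinv Y Z X hZ hX
    have a := ev12 n T halt X Y Z
    have b := ev23 n T halt Y X Z
    linarith
  · have k := keylem n T halt V hinv X Z Y hZ hY
    have a := ev23 n T halt X Y Z
    linarith
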